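/- For every z ∈ ℝ + i·ℝ_{>0} (the upper half plane), the Bloch–Wigner function satisfies D(z) = D((z−1)/z) = D(1/(1−z)). -/

import Mathlib

/-- The dilogarithm `Li₂(z) = -∫₀^z Log(1-u)/u du`, parametrized along the segment from `0` to
`z`. -/
noncomputable def Li2 (z : ℂ) : ℂ :=
  -∫ t in (0:ℝ)..1, Complex.log (1 - (t : ℂ) * z) / (t : ℂ)

open Complex intervalIntegral MeasureTheory Metric Set Interval

/-- lower bound for |1 - t z| -/
lemma den_lb {x : ℂ} {M t : ℝ} (him : 0 < x.im) (hn : ‖x‖ ≤ M) (ht : 0 ≤ t) :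
    min (1/2) (x.im/(2*M)) ≤ ‖1 - (t:ℂ) * x‖ := by
  have hM : 0 < M := lt_of_lt_of_le (lt_of_lt_of_le him (le_trans (le_abs_self _) (Complex.abs_im_le_norm x))) hn
  rcases le_or_gt t (1/(2*M)) with h | h
  · refine le_trans (min_le_left _ _) ?_
    have h1 : ‖(t:ℂ) * x‖ ≤ 1/2 := by
      rw [norm_mul, Complex.norm_real, Real.norm_of_nonneg ht]
      calc t * ‖x‖ ≤ (1/(2*M)) * M := by
            apply mul_le_mul h hn (norm_nonneg x) (by positivity)
        _ = 1/2 := by field_simp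
    have h2 : ‖(1:ℂ)‖ - ‖(t:ℂ)*x‖ ≤ ‖1 - (t:ℂ)*x‖ :=
      norm_sub_norm_le _ _
    simp only [norm_one] at h2
    linarith
  · refine le_trans (min_le_right _ _) ?_
    have h2 : |(1 - (t:ℂ)*x).im| ≤ ‖1 - (t:ℂ)*x‖ := Complex.abs_im_le_norm _
    have h3 : |(1 - (t:ℂ)*x).im| = t * x.im := by
      have h4 : (1 - (t:ℂ)*x).im = -(t*x.im) := by simp
      rw [h4, abs_neg, _root_.abs_of_nonneg (by positivity)]
    rw [h3] at h2
    calc x.im/(2*M) = (1/(2*M)) * x.im := by ring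
      _ ≤ t * x.im := by apply mul_le_mul_of_nonneg_right h.le him.le
      _ ≤ _ := h2

lemma mem_slit {x : ℂ} (him : 0 < x.im) {t : ℝ} (ht : 0 ≤ t) :
    1 - (t:ℂ) * x ∈ Complex.slitPlane := by
  rw [Complex.mem_slitPlane_iff]
  rcases eq_or_lt_of_le ht with h | h
  · left; simp [← h]
  · right
    have : (1 - (t:ℂ) * x).im = -(t * x.im) := by simp
    rw [this]
    have : 0 < t * x.im := by positivity
    simp only [ne_eq, neg_eq_zero]
    linarith

theorem Li2_hasDerivAt {z : ℂ} (hz : 0 < z.im) :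
    HasDerivAt Li2 (-(Complex.log (1 - z) / z)) z := by
  have hz0 : z ≠ 0 := by intro h; rw [h] at hz; simp at hz
  set δ := z.im with hδdef
  have hδ : 0 < δ := hz
  set ε := δ/2 with hεdef
  have hε : 0 < ε := by positivity
  set M := ‖z‖ + δ with hMdef
  have hM : 0 < M := by positivity
  set r := min (1/2:ℝ) ((δ/2)/(2*M)) with hrdef
  have hr : 0 < r := lt_min (by norm_num) (by positivity)
  -- facts about points in the ball
  have hball : ∀ x ∈ ball z ε, 0 < x.im ∧ δ/2 ≤ x.im ∧ ‖x‖ ≤ M := by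
    intro x hx
    rw [mem_ball, Complex.dist_eq] at hx
    have h1 : |x.im - z.im| < ε := by
      have := Complex.abs_im_le_norm (x - z)
      simp only [Complex.sub_im] at this
      linarith
    have h2 : δ/2 ≤ x.im := by
      rcases abs_lt.mp h1 with ⟨hl, _⟩
      simp only [hεdef] at hl ⊢
      linarith
    refine ⟨by linarith [hδ], h2, ?_⟩
    have h3 : ‖x‖ ≤ ‖z‖ + ‖x - z‖ := by
      calc ‖x‖ = ‖z + (x - z)‖ := by ring_nf
        _ ≤ _ := norm_add_le _ _
    have : ε ≤ δ := by rw [hεdef]; linarith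
    rw [hMdef]; linarith
  -- lower bound on denominators, uniform over the ball
  have hlow : ∀ x ∈ ball z ε, ∀ t : ℝ, 0 ≤ t → r ≤ ‖1 - (t:ℂ) * x‖ := by
    intro x hx t ht
    obtain ⟨him, h2, h3⟩ := hball x hx
    refine le_trans ?_ (den_lb him h3 ht)
    exact min_le_min le_rfl (by apply div_le_div_of_nonneg_right h2 (by positivity))
  set F : ℂ → ℝ → ℂ := fun x t => Complex.log (1 - (t:ℂ) * x) / (t:ℂ) with hF
  set F' : ℂ → ℝ → ℂ := fun x t => -(1 - (t:ℂ) * x)⁻¹ with hF'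
  have hIoc : Ι (0:ℝ) 1 = Ioc (0:ℝ) 1 := uIoc_of_le zero_le_one
  have hcont : ∀ x : ℂ, 0 < x.im → ContinuousOn (F x) (Ioc (0:ℝ) 1) := by
    intro x hx
    apply ContinuousOn.div
    · apply ContinuousOn.clog
      · exact continuousOn_const.sub (Complex.continuous_ofReal.continuousOn.mul continuousOn_const)
      · intro t ht; exact mem_slit hx ht.1.le
    · exact Complex.continuous_ofReal.continuousOn
    · intro t ht; exact Complex.ofReal_ne_zero.mpr (ne_of_gt ht.1)
  have hmeas : ∀ᶠ x in nhds z, AEStronglyMeasurable (F x) (volume.restrict (Ι (0:ℝ) 1)) := by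
    filter_upwards [ball_mem_nhds z hε] with x hx
    rw [hIoc]
    exact (hcont x (hball x hx).1).aestronglyMeasurable measurableSet_Ioc
  have hint : IntervalIntegrable (F z) volume 0 1 := by
    rw [intervalIntegrable_iff, hIoc]
    apply Integrable.mono' (integrable_const (‖z‖ / r))
    · exact (hcont z hz).aestronglyMeasurable measurableSet_Ioc
    · rw [ae_restrict_iff' measurableSet_Ioc]
      refine ae_of_all _ fun t ht => ?_
      have hmvt : ‖Complex.log (1 - ((t:ℝ):ℂ)*z) - Complex.log (1 - ((0:ℝ):ℂ)*z)‖
          ≤ (‖z‖ / r) * ‖t - 0‖ := by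
        apply Convex.norm_image_sub_le_of_norm_hasDerivWithin_le
          (f := fun s : ℝ => Complex.log (1 - (s:ℂ)*z)) (f' := fun s : ℝ => -z / (1 - (s:ℂ)*z))
          ?_ ?_ (convex_Icc 0 1) (left_mem_Icc.mpr zero_le_one) (⟨ht.1.le, ht.2⟩)
        · intro s hs
          have h1 : HasDerivAt (fun s : ℝ => 1 - (s:ℂ)*z) (-z) s := by
            simpa using (Complex.ofRealCLM.hasDerivAt.mul_const z).const_sub 1
          have h2 := h1.clog_real (mem_slit hz hs.1)
          have h3 : -z / (1 - (s:ℂ)*z) = -z / (1 - (s:ℂ)*z) := rfl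
          exact h2.hasDerivWithinAt
        · intro s hs
          rw [norm_div, norm_neg]
          gcongr
          exact hlow z (mem_ball_self hε) s hs.1
      simp only [Complex.ofReal_zero, zero_mul, sub_zero, Complex.log_one, norm_zero,
        sub_zero] at hmvt
      rw [Real.norm_eq_abs, _root_.abs_of_nonneg ht.1.le] at hmvt
      have : ‖F z t‖ = ‖Complex.log (1 - ((t:ℝ):ℂ)*z)‖ / t := by
        rw [hF]
        simp only [norm_div, Complex.norm_real, Real.norm_eq_abs,
          _root_.abs_of_nonneg ht.1.le]
      rw [this, div_le_iff₀ ht.1]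
      linarith [hmvt]
  have hF'meas : AEStronglyMeasurable (F' z) (volume.restrict (Ι (0:ℝ) 1)) := by
    rw [hIoc]
    apply ContinuousOn.aestronglyMeasurable ?_ measurableSet_Ioc
    apply ContinuousOn.neg
    apply ContinuousOn.inv₀
    · exact continuousOn_const.sub (Complex.continuous_ofReal.continuousOn.mul continuousOn_const)
    · intro t ht
      have h1 := lt_of_lt_of_le hr (hlow z (mem_ball_self hε) t ht.1.le)
      intro h; rw [h] at h1; simp at h1
  have hbound : ∀ᵐ t ∂volume, t ∈ Ι (0:ℝ) 1 → ∀ x ∈ ball z ε, ‖F' x t‖ ≤ 1/r := by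
    refine ae_of_all _ fun t ht x hx => ?_
    rw [hIoc] at ht
    have h1 := hlow x hx t ht.1.le
    rw [hF']
    simp only [norm_neg, norm_inv]
    rw [one_div]
    exact inv_anti₀ hr h1
  have hdiff : ∀ᵐ t ∂volume, t ∈ Ι (0:ℝ) 1 → ∀ x ∈ ball z ε,
      HasDerivAt (fun x => F x t) (F' x t) x := by
    refine ae_of_all _ fun t ht x hx => ?_
    rw [hIoc] at ht
    have ht0 : (t:ℂ) ≠ 0 := Complex.ofReal_ne_zero.mpr (ne_of_gt ht.1)
    have h1 : HasDerivAt (fun x : ℂ => 1 - (t:ℂ)*x) (-(t:ℂ)) x := by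
      simpa using ((hasDerivAt_id x).const_mul (t:ℂ)).const_sub 1
    have h2 := (h1.clog (mem_slit (hball x hx).1 ht.1.le)).div_const (t:ℂ)
    have hden : (1 - (t:ℂ)*x) ≠ 0 := by
      have h3 := lt_of_lt_of_le hr (hlow x hx t ht.1.le)
      intro h; rw [h] at h3; simp at h3
    refine h2.congr_deriv ?_
    rw [hF']
    field_simp
  have key := (intervalIntegral.hasDerivAt_integral_of_dominated_loc_of_deriv_le (ball_mem_nhds z hε) hmeas hint
    hF'meas hbound intervalIntegrable_const hdiff).2
  have hFTC : (∫ t in (0:ℝ)..1, F' z t) = Complex.log (1 - z) / z := by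
    have hci : IntervalIntegrable (F' z) volume 0 1 := by
      apply ContinuousOn.intervalIntegrable
      rw [uIcc_of_le zero_le_one]
      apply ContinuousOn.neg
      apply ContinuousOn.inv₀
      · exact continuousOn_const.sub (Complex.continuous_ofReal.continuousOn.mul continuousOn_const)
      · intro t ht
        have h1 := lt_of_lt_of_le hr (hlow z (mem_ball_self hε) t ht.1)
        intro h; rw [h] at h1; simp at h1
    have heq : ∀ t ∈ uIcc (0:ℝ) 1,
        HasDerivAt (fun s : ℝ => Complex.log (1 - (s:ℂ)*z) / z) (F' z t) t := by
      intro t ht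
      rw [uIcc_of_le zero_le_one] at ht
      have h1 : HasDerivAt (fun s : ℝ => 1 - (s:ℂ)*z) (-z) t := by
        simpa using (Complex.ofRealCLM.hasDerivAt.mul_const z).const_sub 1
      have h2 := (h1.clog_real (mem_slit hz ht.1)).div_const z
      have hden : (1 - (t:ℂ)*z) ≠ 0 := by
        have h3 := lt_of_lt_of_le hr (hlow z (mem_ball_self hε) t ht.1)
        intro h; rw [h] at h3; simp at h3
      refine h2.congr_deriv ?_
      rw [hF']
      field_simp
    have h4 := intervalIntegral.integral_eq_sub_of_hasDerivAt heq hci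
    rw [h4]
    simp
  rw [hFTC] at key
  have : Li2 = fun x => -∫ t in (0:ℝ)..1, F x t := by
    funext x; rw [Li2, hF]
  rw [this]
  exact key.neg


/-- The Bloch–Wigner function `D(z) = Im(Li₂(z)) + arg(1-z)·log|z|`. -/
noncomputable def blochWigner (z : ℂ) : ℝ :=
  (Li2 z).im + Complex.arg (1 - z) * Real.log ‖z‖

noncomputable def Lmap (z : ℂ) : ℂ →L[ℝ] ℝ :=
  (-(Complex.log (1-z)).re) • (Complex.imCLM.comp ((z⁻¹ • (1 : ℂ →L[ℂ] ℂ)).restrictScalars ℝ)) +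
  (-(Complex.log z).re) • (Complex.imCLM.comp (((1-z)⁻¹ • (1 : ℂ →L[ℂ] ℂ)).restrictScalars ℝ))

lemma Lmap_apply (z v : ℂ) :
    Lmap z v = -(Complex.log (1-z)).re * (z⁻¹ * v).im
      + -(Complex.log z).re * ((1-z)⁻¹ * v).im := by
  simp [Lmap]

theorem bw_hasFDerivAt {z : ℂ} (hz : 0 < z.im) : HasFDerivAt blochWigner (Lmap z) z := by
  have hz0 : z ≠ 0 := by intro h; rw [h] at hz; simp at hz
  have hzim : z.im ≠ 0 := ne_of_gt hz
  have hsz : z ∈ Complex.slitPlane := Or.inr hzim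
  have hs1z : (1:ℂ) - z ∈ Complex.slitPlane := by
    right; simp only [Complex.sub_im, Complex.one_im, zero_sub, ne_eq, neg_eq_zero]; exact hzim
  have hLi2 := Li2_hasDerivAt hz
  have hlogz : HasDerivAt Complex.log z⁻¹ z := Complex.hasDerivAt_log hsz
  have hlog1z : HasDerivAt (fun w => Complex.log (1 - w)) (-(1-z)⁻¹) z := by
    have h1 : HasDerivAt (fun w : ℂ => 1 - w) (-1) z := by
      simpa using (hasDerivAt_id z).const_sub 1
    have h2 := h1.clog hs1z
    convert h2 using 1
    field_simp
  have h1 : HasFDerivAt (fun w => (Li2 w).im)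
      (Complex.imCLM.comp ((ContinuousLinearMap.smulRight (1:ℂ→L[ℂ]ℂ)
        (-(Complex.log (1-z)/z))).restrictScalars ℝ)) z :=
    Complex.imCLM.hasFDerivAt.comp z (hLi2.hasFDerivAt.restrictScalars ℝ)
  have h2 : HasFDerivAt (fun w => (Complex.log (1-w)).im)
      (Complex.imCLM.comp ((ContinuousLinearMap.smulRight (1:ℂ→L[ℂ]ℂ)
        (-(1-z)⁻¹)).restrictScalars ℝ)) z :=
    Complex.imCLM.hasFDerivAt.comp z (hlog1z.hasFDerivAt.restrictScalars ℝ)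
  have h3 : HasFDerivAt (fun w => (Complex.log w).re)
      (Complex.reCLM.comp ((ContinuousLinearMap.smulRight (1:ℂ→L[ℂ]ℂ)
        (z⁻¹)).restrictScalars ℝ)) z :=
    Complex.reCLM.hasFDerivAt.comp z (hlogz.hasFDerivAt.restrictScalars ℝ)
  have h5 := h1.add (h2.mul h3)
  have hfun : blochWigner = fun w => (Li2 w).im + (Complex.log (1-w)).im * (Complex.log w).re := by
    funext w; rw [blochWigner, Complex.log_im, Complex.log_re]
  rw [hfun]
  refine h5.congr_fderiv ?_
  apply ContinuousLinearMap.ext; intro v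
  rw [Lmap_apply]
  simp only [ContinuousLinearMap.add_apply, ContinuousLinearMap.coe_comp',
    ContinuousLinearMap.coe_restrictScalars', Function.comp_apply,
    ContinuousLinearMap.smulRight_apply, ContinuousLinearMap.one_apply, smul_eq_mul,
    Complex.imCLM_apply, Complex.reCLM_apply, ContinuousLinearMap.coe_smul', Pi.smul_apply]
  simp only [div_eq_mul_inv, Complex.mul_im, Complex.mul_re, Complex.neg_im, Complex.neg_re]
  ring


lemma one_sub_ne {z : ℂ} (hz : 0 < z.im) : (1 : ℂ) - z ≠ 0 := by
  intro h
  have : ((1:ℂ) - z).im = 0 := by rw [h]; simp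
  simp only [Complex.sub_im, Complex.one_im, zero_sub, neg_eq_zero] at this
  exact (ne_of_gt hz) this

lemma inv_one_sub_im {z : ℂ} (hz : 0 < z.im) : 0 < ((1 - z)⁻¹).im := by
  rw [Complex.inv_im]
  have h1 : ((1:ℂ) - z).im = -z.im := by simp
  have h2 : 0 < Complex.normSq (1 - z) := Complex.normSq_pos.mpr (one_sub_ne hz)
  simp only [h1, neg_neg]
  positivity

lemma re_log_inv (w : ℂ) : (Complex.log w⁻¹).re = -(Complex.log w).re := by
  simp [Complex.log_re, map_inv₀, Real.log_inv]

lemma re_log_one_sub_inv {z : ℂ} (hz0 : z ≠ 0) (hz1 : (1:ℂ) - z ≠ 0) :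
    (Complex.log (1 - (1-z)⁻¹)).re = (Complex.log z).re - (Complex.log (1-z)).re := by
  have h1 : 1 - (1-z)⁻¹ = -z / (1-z) := by field_simp; ring
  rw [h1]
  simp only [Complex.log_re, norm_div, norm_neg]
  rw [Real.log_div (norm_ne_zero_iff.mpr hz0) (norm_ne_zero_iff.mpr hz1)]

lemma diff_hasFDerivAt {z : ℂ} (hz : 0 < z.im) :
    HasFDerivAt (fun w => blochWigner w - blochWigner ((1-w)⁻¹)) (0 : ℂ →L[ℝ] ℝ) z := by
  have hz0 : z ≠ 0 := by intro h; rw [h] at hz; simp at hz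
  have hz1 : (1:ℂ) - z ≠ 0 := one_sub_ne hz
  have hw : 0 < ((1-z)⁻¹).im := inv_one_sub_im hz
  have hg : HasDerivAt (fun w : ℂ => (1-w)⁻¹) (((1-z)^2)⁻¹) z := by
    have h1 : HasDerivAt (fun w : ℂ => 1 - w) (-1) z := by
      simpa using (hasDerivAt_id z).const_sub 1
    have h2 := h1.inv hz1
    refine h2.congr_deriv ?_
    field_simp
  have hD2 := (bw_hasFDerivAt hw).comp z (hg.hasFDerivAt.restrictScalars ℝ)
  have h5 := (bw_hasFDerivAt hz).sub hD2
  refine h5.congr_fderiv ?_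
  apply ContinuousLinearMap.ext; intro v
  simp only [ContinuousLinearMap.coe_sub', Pi.sub_apply, ContinuousLinearMap.coe_comp',
    ContinuousLinearMap.coe_restrictScalars', Function.comp_apply,
    ContinuousLinearMap.smulRight_apply, ContinuousLinearMap.one_apply, smul_eq_mul,
    ContinuousLinearMap.zero_apply, ContinuousLinearMap.toSpanSingleton_apply]
  rw [Lmap_apply, Lmap_apply]
  rw [re_log_inv, re_log_one_sub_inv hz0 hz1]
  have hc1 : ((1-z)⁻¹)⁻¹ * (v * ((1-z)^2)⁻¹) = (1-z)⁻¹ * v := by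
    rw [inv_inv]; field_simp
  have hc2 : (1 - (1-z)⁻¹)⁻¹ * (v * ((1-z)^2)⁻¹) = -(z⁻¹ * v + (1-z)⁻¹ * v) := by
    have h1 : 1 - (1-z)⁻¹ = -z / (1-z) := by field_simp; ring
    rw [h1]
    field_simp
    ring
  rw [hc1, hc2]
  simp only [Complex.neg_im, Complex.add_im]
  ring

lemma bw_inv_eq (z : ℂ) (hz : 0 < z.im) : blochWigner z = blochWigner ((1 - z)⁻¹) := by
  set ζ : ℂ := ⟨1/2, Real.sqrt 3 / 2⟩ with hζdef
  have hζ : 0 < ζ.im := by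
    simp only [hζdef]
    positivity
  have hfix : ((1:ℂ) - ζ)⁻¹ = ζ := by
    apply inv_eq_of_mul_eq_one_left
    have h3 : Real.sqrt 3 * Real.sqrt 3 = 3 := Real.mul_self_sqrt (by norm_num)
    apply Complex.ext
    · simp only [Complex.mul_re, Complex.sub_re, Complex.sub_im, Complex.one_re, Complex.one_im,
        hζdef, Complex.one_re]
      nlinarith
    · simp only [Complex.mul_im, Complex.sub_re, Complex.sub_im, Complex.one_re, Complex.one_im,
        hζdef, Complex.one_im]
      nlinarith
  have hconst : ∀ x ∈ {w : ℂ | 0 < w.im}, ∀ y ∈ {w : ℂ | 0 < w.im},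
      blochWigner x - blochWigner ((1-x)⁻¹) = blochWigner y - blochWigner ((1-y)⁻¹) := by
    intro x hx y hy
    have key := (convex_halfSpace_im_gt (0:ℝ)).norm_image_sub_le_of_norm_hasFDerivWithin_le
      (f := fun w => blochWigner w - blochWigner ((1-w)⁻¹)) (f' := fun _ => (0 : ℂ →L[ℝ] ℝ))
      (C := 0) (fun w hw => (diff_hasFDerivAt hw).hasFDerivWithinAt)
      (fun w _ => by simp) hy hx
    have : ‖(blochWigner x - blochWigner ((1-x)⁻¹)) - (blochWigner y - blochWigner ((1-y)⁻¹))‖ ≤ 0 := by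
      simpa using key
    have h0 := norm_eq_zero.mp (le_antisymm this (norm_nonneg _))
    linarith [sub_eq_zero.mp h0]
  have h1 := hconst z hz ζ hζ
  rw [hfix] at h1
  simp only [sub_self] at h1
  linarith [h1]

/-- For `z` in the upper half plane, `D(z) = D((z-1)/z) = D(1/(1-z))`. -/
theorem stmt3 (z : ℂ) (hz : 0 < z.im) :
    blochWigner z = blochWigner ((z - 1) / z) ∧
      blochWigner z = blochWigner (1 / (1 - z)) := by
  have hz0 : z ≠ 0 := by intro h; rw [h] at hz; simp at hz
  have hz1 : (1:ℂ) - z ≠ 0 := one_sub_ne hz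
  have h1 : blochWigner z = blochWigner ((1 - z)⁻¹) := bw_inv_eq z hz
  have hw : 0 < ((1-z)⁻¹).im := inv_one_sub_im hz
  have h2 : blochWigner ((1-z)⁻¹) = blochWigner ((1 - (1-z)⁻¹)⁻¹) := bw_inv_eq _ hw
  have h3 : (1 - ((1:ℂ)-z)⁻¹)⁻¹ = (z - 1)/z := by
    have h4 : 1 - ((1:ℂ)-z)⁻¹ = -z / (1-z) := by field_simp; ring
    rw [h4]
    rw [inv_div, div_eq_div_iff (by simpa using hz0) hz0]
    ring
  constructor
  · rw [h1, h2, h3]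
  · rw [h1, one_div]
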